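/- For a stationary AR(1) model with multiplicative measurement error, the h-step mean squared prediction error of the corrected forecast starting from X̂_T = X_T*/β₀ equals P_e^{(h)} = φ₁^{2h}{σ_ε²/(1−φ₁²) + μ²}σ_u² + Σ_{i=0}^{h-1}φ₁^{2i}σ_ε², where μ = E(X_T). -/

import Mathlib

open MeasureTheory ProbabilityTheory Filter Matrix

noncomputable def expect {Ω : Type*} [MeasurableSpace Ω] (P : Measure Ω) (f : Ω → ℝ) : ℝ :=
  ∫ ω, f ω ∂P

noncomputable def cov {Ω : Type*} [MeasurableSpace Ω] (P : Measure Ω) (f g : Ω → ℝ) : ℝ :=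
  expect P (fun ω => (f ω - expect P f) * (g ω - expect P g))

noncomputable def pvar {Ω : Type*} [MeasurableSpace Ω] (P : Measure Ω) (f : Ω → ℝ) : ℝ :=
  cov P f f

/-- For a stationary AR(1) model with multiplicative measurement error, the
h-step mean squared prediction error of the corrected forecast (started from
`X̂_T = X*_T/β0`) equals
`P_e(h) = φ1^{2h} {σε²/(1-φ1²) + μ²} σu² + ∑_{i=0}^{h-1} φ1^{2i} σε²`. -/
theorem ar1_prediction_error_multiplicative
    {Ω : Type*} [MeasurableSpace Ω] (P : Measure Ω) [IsProbabilityMeasure P]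
    (X Xhat : ℕ → Ω → ℝ) (ε : ℕ → Ω → ℝ) (uT Xstar : Ω → ℝ)
    (φ0 φ1 β0 σε σu μX : ℝ) (Pe : ℕ → ℝ)
    (hφ : |φ1| < 1) (hβ0 : 0 < β0)
    (hAR : ∀ h ω, X (h + 1) ω = φ0 + φ1 * X h ω + ε (h + 1) ω)
    (hstar : ∀ ω, Xstar ω = β0 * uT ω * X 0 ω)
    (hXhat0 : ∀ ω, Xhat 0 ω = Xstar ω / β0)
    (hXhatS : ∀ h ω, Xhat (h + 1) ω = φ0 + φ1 * Xhat h ω)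
    (hXmean : expect P (X 0) = μX)
    (hXvar : pvar P (X 0) = σε ^ 2 / (1 - φ1 ^ 2))
    (humean : expect P uT = 1)
    (huvar : pvar P uT = σu ^ 2)
    (huX : IndepFun uT (X 0) P)
    (huε : ∀ h, IndepFun uT (ε h) P)
    (hεmean : ∀ h, expect P (ε h) = 0)
    (hεvar : ∀ h, expect P (fun ω => ε h ω ^ 2) = σε ^ 2)
    (hindep : ∀ h, IndepFun (ε (h + 1)) (fun ω => Xhat h ω - X h ω) P)
    (hεε : ∀ h k, h ≠ k → IndepFun (ε h) (ε k) P)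
    (hεX : ∀ h, IndepFun (ε (h + 1)) (X 0) P)
    (hεint : ∀ h, Integrable (ε h) P)
    (hεsq : ∀ h, Integrable (fun ω => ε h ω ^ 2) P)
    (huint : Integrable uT P)
    (husq : Integrable (fun ω => uT ω ^ 2) P)
    (hXint : Integrable (X 0) P)
    (hXsq : Integrable (fun ω => X 0 ω ^ 2) P)
    (hdiffsq : ∀ h, Integrable (fun ω => (Xhat h ω - X h ω) ^ 2) P)
    (hPe : ∀ h, Pe h = expect P (fun ω => (Xhat h ω - X h ω) ^ 2)) :
    ∀ h : ℕ, 1 ≤ h →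
      Pe h = φ1 ^ (2 * h) * (σε ^ 2 / (1 - φ1 ^ 2) + μX ^ 2) * σu ^ 2
          + ∑ i ∈ Finset.range h, φ1 ^ (2 * i) * σε ^ 2 := by

  -- abbreviation for the error process
  have hβ0' : β0 ≠ 0 := ne_of_gt hβ0
  -- D 0 = (uT - 1) * X 0
  have hD0 : ∀ ω, Xhat 0 ω - X 0 ω = (uT ω - 1) * X 0 ω := by
    intro ω
    rw [hXhat0, hstar]
    field_simp
  -- recursion for D
  have hDrec : ∀ h ω, Xhat (h + 1) ω - X (h + 1) ω
      = φ1 * (Xhat h ω - X h ω) - ε (h + 1) ω := by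
    intro h ω
    rw [hXhatS, hAR]
    ring
  -- integrability of uT - 1 and (uT-1)^2
  have hu1 : Integrable (fun ω => uT ω - 1) P := huint.sub (integrable_const 1)
  have hu2 : Integrable (fun ω => (uT ω - 1) ^ 2) P := by
    have heq : (fun ω => (uT ω - 1) ^ 2) = fun ω => (uT ω ^ 2 - 2 * uT ω) + 1 := by
      funext ω; ring
    rw [heq]
    exact (husq.sub (huint.const_mul 2)).add (integrable_const 1)
  -- independence of uT - 1 and X 0
  have hiuX : IndepFun (fun ω => uT ω - 1) (X 0) P :=
    huX.comp (measurable_id.sub_const 1) measurable_id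
  -- integrability of D
  have hDint : ∀ h, Integrable (fun ω => Xhat h ω - X h ω) P := by
    intro h
    induction h with
    | zero =>
      have : (fun ω => Xhat 0 ω - X 0 ω) = fun ω => (uT ω - 1) * X 0 ω := funext hD0
      rw [this]
      exact hiuX.integrable_mul hu1 hXint
    | succ n ih =>
      have : (fun ω => Xhat (n + 1) ω - X (n + 1) ω)
          = fun ω => φ1 * (Xhat n ω - X n ω) - ε (n + 1) ω := funext (hDrec n)
      rw [this]
      exact (ih.const_mul φ1).sub (hεint (n + 1))
  -- cross term vanishes
  have hcross : ∀ h, ∫ ω, ε (h + 1) ω * (Xhat h ω - X h ω) ∂P = 0 := by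
    intro h
    have h1 := (hindep h).integral_fun_mul_eq_mul_integral (hεint (h + 1)).aestronglyMeasurable (hDint h).aestronglyMeasurable
    have h2 : ∫ ω, ε (h + 1) ω ∂P = 0 := hεmean (h + 1)
    simpa [Pi.mul_apply, h2] using h1
  have hεDint : ∀ h, Integrable (fun ω => ε (h + 1) ω * (Xhat h ω - X h ω)) P := by
    intro h
    exact (hindep h).integrable_mul (hεint (h + 1)) (hDint h)
  -- recursion for Pe
  have hPerec : ∀ h, Pe (h + 1) = φ1 ^ 2 * Pe h + σε ^ 2 := by
    intro h
    rw [hPe (h + 1), hPe h]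
    have heq : (fun ω => (Xhat (h + 1) ω - X (h + 1) ω) ^ 2)
        = fun ω => (φ1 ^ 2 * (Xhat h ω - X h ω) ^ 2
            - 2 * φ1 * (ε (h + 1) ω * (Xhat h ω - X h ω))) + ε (h + 1) ω ^ 2 := by
      funext ω; rw [hDrec h ω]; ring
    show (∫ ω, (Xhat (h + 1) ω - X (h + 1) ω) ^ 2 ∂P)
        = φ1 ^ 2 * (∫ ω, (Xhat h ω - X h ω) ^ 2 ∂P) + σε ^ 2
    rw [heq]
    have hA : Integrable (fun ω => φ1 ^ 2 * (Xhat h ω - X h ω) ^ 2) P :=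
      (hdiffsq h).const_mul (φ1 ^ 2)
    have hB : Integrable (fun ω => 2 * φ1 * (ε (h + 1) ω * (Xhat h ω - X h ω))) P :=
      (hεDint h).const_mul (2 * φ1)
    have hAB : Integrable (fun ω => φ1 ^ 2 * (Xhat h ω - X h ω) ^ 2
        - 2 * φ1 * (ε (h + 1) ω * (Xhat h ω - X h ω))) P := hA.sub hB
    rw [integral_add hAB (hεsq (h + 1)), integral_sub hA hB,
      integral_const_mul, integral_const_mul, hcross h]
    have hεv : (∫ ω, ε (h + 1) ω ^ 2 ∂P) = σε ^ 2 := hεvar (h + 1)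
    rw [hεv]
    ring
  -- E[(uT - 1)^2] = σu^2
  have hEu : (∫ ω, (uT ω - 1) ^ 2 ∂P) = σu ^ 2 := by
    rw [← huvar]
    show (∫ ω, (uT ω - 1) ^ 2 ∂P) = ∫ ω, (uT ω - expect P uT) * (uT ω - expect P uT) ∂P
    rw [humean]
    congr 1; funext ω; ring
  -- E[X 0 ^ 2] = Var + μ^2
  have hEX2 : (∫ ω, X 0 ω ^ 2 ∂P) = σε ^ 2 / (1 - φ1 ^ 2) + μX ^ 2 := by
    have hvar : σε ^ 2 / (1 - φ1 ^ 2)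
        = ∫ ω, (X 0 ω - μX) * (X 0 ω - μX) ∂P := by
      rw [← hXvar]
      show cov P (X 0) (X 0) = _
      show (∫ ω, (X 0 ω - expect P (X 0)) * (X 0 ω - expect P (X 0)) ∂P) = _
      rw [hXmean]
    have heq : (fun ω => (X 0 ω - μX) * (X 0 ω - μX))
        = fun ω => (X 0 ω ^ 2 - 2 * μX * X 0 ω) + μX ^ 2 := by
      funext ω; ring
    rw [heq] at hvar
    have hC : Integrable (fun ω => 2 * μX * X 0 ω) P := hXint.const_mul (2 * μX)
    have hD : Integrable (fun ω => X 0 ω ^ 2 - 2 * μX * X 0 ω) P := hXsq.sub hC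
    rw [integral_add hD (integrable_const _), integral_sub hXsq hC,
      integral_const_mul, integral_const] at hvar
    have hm : (∫ ω, X 0 ω ∂P) = μX := hXmean
    simp only [measure_univ, probReal_univ, ENNReal.toReal_one, smul_eq_mul, one_mul, hm] at hvar
    linarith [hvar]
  -- base case
  have hE0 : Pe 0 = (σε ^ 2 / (1 - φ1 ^ 2) + μX ^ 2) * σu ^ 2 := by
    rw [hPe 0]
    have heq : (fun ω => (Xhat 0 ω - X 0 ω) ^ 2)
        = fun ω => (uT ω - 1) ^ 2 * X 0 ω ^ 2 := by
      funext ω; rw [hD0 ω]; ring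
    show (∫ ω, (Xhat 0 ω - X 0 ω) ^ 2 ∂P) = _
    rw [heq]
    have hind2 : IndepFun (fun ω => (uT ω - 1) ^ 2) (fun ω => X 0 ω ^ 2) P :=
      huX.comp ((measurable_id.sub_const 1).pow_const 2) (measurable_id.pow_const 2)
    have h1 : (∫ ω, (uT ω - 1) ^ 2 * X 0 ω ^ 2 ∂P)
        = (∫ ω, (uT ω - 1) ^ 2 ∂P) * ∫ ω, X 0 ω ^ 2 ∂P :=
      hind2.integral_fun_mul_eq_mul_integral hu2.aestronglyMeasurable hXsq.aestronglyMeasurable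
    rw [h1, hEu, hEX2]
    ring
  -- main induction
  have main : ∀ h : ℕ, Pe h = φ1 ^ (2 * h) * (σε ^ 2 / (1 - φ1 ^ 2) + μX ^ 2) * σu ^ 2
      + ∑ i ∈ Finset.range h, φ1 ^ (2 * i) * σε ^ 2 := by
    intro h
    induction h with
    | zero => simpa using hE0
    | succ n ih =>
      have hsum : ∑ i ∈ Finset.range (n + 1), φ1 ^ (2 * i) * σε ^ 2
          = φ1 ^ 2 * ∑ i ∈ Finset.range n, φ1 ^ (2 * i) * σε ^ 2 + σε ^ 2 := by
        rw [Finset.sum_range_succ', Finset.mul_sum]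
        congr 1
        · refine Finset.sum_congr rfl fun i _ => ?_
          have h2 : 2 * (i + 1) = 2 * i + 2 := by ring
          rw [h2, pow_add]
          ring
        · norm_num
      rw [hPerec n, ih, hsum]
      have h2 : 2 * (n + 1) = 2 * n + 2 := by ring
      rw [h2, pow_add]
      ring
  intro h _
  exact main h
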